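/- Let K, P ∈ M₂(ℂ) and Φ := fromBlocks K P (P‡) (K‡) ∈ M₄(ℂ) with det Φ ≠ 0, and suppose that for every Hermitian v ∈ M₂(ℂ) there exists a Hermitian w with Φ·γ(v) = γ(w)·Φ (i.e. Φ belongs to the Clifford group). Then there exist finitely many Hermitian matrices v₁, …, vₙ ∈ M₂(ℂ), each with det vᵢ ≠ 0 (equivalently, of nonzero Lorentz pseudo-norm), such that Φ = γ(v₁)·γ(v₂)⋯γ(vₙ). That is, the Clifford group is multiplicatively generated by the Clifford images of the non-null Minkowski vectors. -/

import Mathlib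

open Matrix

/-- The space of 2×2 complex matrices. -/
abbrev M2 : Type := Matrix (Fin 2) (Fin 2) ℂ

/-- The space of 4×4 complex matrices, indexed by blocks (endomorphisms of 4-spinor space). -/
abbrev M4 : Type := Matrix (Fin 2 ⊕ Fin 2) (Fin 2 ⊕ Fin 2) ℂ

/-- The Dirac map in two-spinor (Weyl) form: `γ(y) = fromBlocks 0 (√2·y) (√2·adj y) 0`. -/
noncomputable def diracGamma (y : M2) : M4 :=
  fromBlocks 0 ((Real.sqrt 2 : ℂ) • y) ((Real.sqrt 2 : ℂ) • y.adjugate) 0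

/-- The ε-adjoint `X‡ := adj(Xᴴ)`. -/
def ddag (X : M2) : M2 := (Xᴴ).adjugate

section Helpers

open Complex
open scoped ComplexOrder

/- ### Basic properties of `ddag` -/

lemma ddag_mul (X Y : M2) : ddag (X * Y) = ddag X * ddag Y := by
  simp [ddag, conjTranspose_mul, adjugate_mul_distrib]

lemma ddag_one : ddag 1 = 1 := by simp [ddag]

lemma ddag_zero : ddag 0 = 0 := by simp [ddag]

lemma ddag_smul (c : ℂ) (X : M2) : ddag (c • X) = (starRingEnd ℂ c) • ddag X := by
  simp [ddag, conjTranspose_smul, adjugate_smul]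

lemma ddag_ddag (X : M2) : ddag (ddag X) = X := by
  simp only [ddag, adjugate_conjTranspose]
  rw [conjTranspose_conjTranspose, adjugate_adjugate _ (by simp : Fintype.card (Fin 2) ≠ 1)]
  simp

lemma Matrix.IsHermitian.ddag_eq {h : M2} (hh : h.IsHermitian) : ddag h = h.adjugate := by
  rw [ddag, hh.eq]

lemma det_ddag (X : M2) : (ddag X).det = starRingEnd ℂ X.det := by
  rw [ddag, det_adjugate, det_conjTranspose]; simp

/- ### Products of Hermitian matrices -/

/-- `X` is a finite product of invertible Hermitian matrices. -/
def HProd (X : M2) : Prop :=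
  ∃ l : List M2, (∀ h ∈ l, h.IsHermitian ∧ h.det ≠ 0) ∧ X = l.prod

lemma HProd.mul {X Y : M2} (hX : HProd X) (hY : HProd Y) : HProd (X * Y) := by
  obtain ⟨l, hl, rfl⟩ := hX
  obtain ⟨m, hm, rfl⟩ := hY
  exact ⟨l ++ m, by intro h hh; rcases List.mem_append.1 hh with h' | h'
                    exacts [hl h h', hm h h'], (List.prod_append).symm⟩

lemma HProd.single {h : M2} (h1 : h.IsHermitian) (h2 : h.det ≠ 0) : HProd h :=
  ⟨[h], by simp [h1, h2], by simp⟩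

lemma HProd.det_real {X : M2} (hX : HProd X) : (starRingEnd ℂ) X.det = X.det := by
  obtain ⟨l, hl, rfl⟩ := hX
  induction l with
  | nil => simp
  | cons h t ih =>
    have h1 := (hl h (by simp)).1
    have : (starRingEnd ℂ) h.det = h.det := by
      conv_lhs => rw [← h1.eq]
      rw [det_conjTranspose, Complex.star_def, Complex.conj_conj]
    simp only [List.prod_cons, det_mul, RingHom.map_mul, this,
      ih (fun x hx => hl x (by simp [hx]))]

lemma hprod_A (b : ℝ) : HProd (!![0,1;1,(b:ℂ)] : M2) :=
  HProd.single
    (by ext i j; fin_cases i <;> fin_cases j <;> simp [conjTranspose_apply])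
    (by simp [Matrix.det_fin_two_of])

lemma hprod_B (b : ℝ) : HProd (!![0,I;-I,(b:ℂ)] : M2) :=
  HProd.single
    (by ext i j; fin_cases i <;> fin_cases j <;> simp [conjTranspose_apply])
    (by simp [Matrix.det_fin_two_of])

lemma hprod_swap : HProd (!![0,1;1,0] : M2) := by
  have := hprod_A 0; norm_num at this; exact this

lemma hprod_B0 : HProd (!![0,I;-I,0] : M2) := by
  have := hprod_B 0; norm_num at this; exact this

set_option maxHeartbeats 1000000 in
lemma hprod_upper (c : ℂ) : HProd (!![1,c;0,1] : M2) := by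
  have e : (!![1,c;0,1] : M2)
      = !![0,1;1,0] * !![0,1;1,(c.re:ℂ)] * (!![0,I;-I,0] * !![0,I;-I,(c.im:ℂ)]) := by
    ext i j; fin_cases i <;> fin_cases j <;>
      simp [Matrix.mul_apply, Fin.sum_univ_two] <;> ring_nf <;>
      simp [Complex.ext_iff]
  rw [e]
  exact (hprod_swap.mul (hprod_A c.re)).mul (hprod_B0.mul (hprod_B c.im))

set_option maxHeartbeats 1000000 in
lemma hprod_lower (c : ℂ) : HProd (!![1,0;c,1] : M2) := by
  have e : (!![1,0;c,1] : M2)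
      = !![0,1;1,(c.re:ℂ)] * !![0,1;1,0] * (!![0,I;-I,(-c.im:ℝ)] * !![0,I;-I,0]) := by
    ext i j; fin_cases i <;> fin_cases j <;>
      simp [Matrix.mul_apply, Fin.sum_univ_two] <;> ring_nf <;>
      simp [Complex.ext_iff]
  rw [e]
  exact ((hprod_A c.re).mul hprod_swap).mul ((hprod_B (-c.im)).mul hprod_B0)

lemma hprod_diagonal (D : Fin 2 → ℂ) (h0 : D 0 ≠ 0) (h1 : D 1 ≠ 0) (r : ℝ)
    (hr : D 0 * D 1 = (r:ℂ)) : HProd (diagonal D) := by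
  set s : ℝ := r / Complex.normSq (D 0) with hs
  have hnz : (Complex.normSq (D 0) : ℂ) ≠ 0 := by
    exact_mod_cast fun h => h0 (Complex.normSq_eq_zero.1 (by exact_mod_cast h))
  have key : (starRingEnd ℂ) (D 0) * (s:ℂ) = D 1 := by
    have hmc : D 0 * (starRingEnd ℂ) (D 0) = (Complex.normSq (D 0) : ℂ) := Complex.mul_conj _
    rw [hs]
    push_cast
    field_simp
    linear_combination D 1 * hmc - (starRingEnd ℂ) (D 0) * hr
  have e : diagonal D
      = !![0,1;1,0] * !![0, (starRingEnd ℂ) (D 0); D 0, 0] * !![1,0;0,(s:ℂ)] := by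
    ext i j; fin_cases i <;> fin_cases j <;>
      simp [Matrix.mul_apply, Fin.sum_univ_two, Matrix.diagonal] <;>
      simp [key]
  rw [e]
  have hsne : s ≠ 0 := by
    intro h; rw [h] at key; simp at key; tauto
  exact (hprod_swap.mul (HProd.single
      (by ext i j; fin_cases i <;> fin_cases j <;> simp [conjTranspose_apply])
      (by simp [Matrix.det_fin_two_of]; exact h0))).mul
    (HProd.single
      (by ext i j; fin_cases i <;> fin_cases j <;> simp [conjTranspose_apply])
      (by simp [Matrix.det_fin_two_of]; exact_mod_cast hsne))

lemma hprod_smul_real (r : ℝ) (hr : r ≠ 0) {X : M2} (hX : HProd X) :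
    HProd ((r:ℂ) • X) := by
  have h1 : ((r:ℂ) • (1:M2)).IsHermitian := by
    ext i j; fin_cases i <;> fin_cases j <;>
      simp [conjTranspose_apply, Matrix.one_apply]
  have h2 : ((r:ℂ) • (1:M2)).det ≠ 0 := by
    rw [det_smul]
    simp [hr]
  have e : (r:ℂ) • X = ((r:ℂ) • (1:M2)) * X := by rw [smul_mul_assoc, one_mul]
  rw [e]; exact (HProd.single h1 h2).mul hX

lemma hprod_neg_I_one : HProd ((-Complex.I) • (1:M2)) := by
  have e : (-Complex.I) • (1:M2) = !![0,-1;-1,0] * !![0,-I;I,0] * !![1,0;0,-1] := by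
    ext i j; fin_cases i <;> fin_cases j <;>
      simp [Matrix.mul_apply, Fin.sum_univ_two, Matrix.one_apply]
  rw [e]
  refine (HProd.mul (HProd.mul ?_ ?_) ?_) <;>
  · apply HProd.single
    · ext i j; fin_cases i <;> fin_cases j <;> simp [conjTranspose_apply]
    · simp [Matrix.det_fin_two_of]

/-- Every invertible matrix with real determinant is a finite product of
invertible Hermitian matrices. -/
lemma hprod_main {X : M2} (hd : X.det ≠ 0) (hreal : (starRingEnd ℂ) X.det = X.det) :
    HProd X := by
  set Q : M2 → Prop := fun Y => ∃ c : ℂ, c ≠ 0 ∧ HProd (c • Y) with hQdef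
  have hQ : Q X := by
    apply Matrix.diagonal_transvection_induction_of_det_ne_zero Q X hd
    · -- diagonal
      intro D hD
      rw [det_diagonal, Fin.prod_univ_two] at hD
      have h0 : D 0 ≠ 0 := fun h => hD (by simp [h])
      have h1 : D 1 ≠ 0 := fun h => hD (by simp [h])
      obtain ⟨c, hc⟩ := IsAlgClosed.exists_pow_nat_eq (starRingEnd ℂ (D 0 * D 1))
        (n := 2) (by norm_num)
      have hcne : c ≠ 0 := by
        intro h; rw [h] at hc; simp at hc; tauto
      refine ⟨c, hcne, ?_⟩
      have e : c • diagonal D = diagonal (c • D) := by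
        rw [diagonal_smul]
      rw [e]
      apply hprod_diagonal (c • D) (by simp [hcne, h0]) (by simp [hcne, h1])
        (Complex.normSq (D 0 * D 1))
      have : (c • D) 0 * (c • D) 1 = c^2 * (D 0 * D 1) := by
        simp [Pi.smul_apply, smul_eq_mul]; ring
      rw [this, hc, mul_comm]
      exact Complex.mul_conj _
    · -- transvection
      intro t
      obtain ⟨i, j, hij, c⟩ := t
      refine ⟨1, one_ne_zero, ?_⟩
      rw [one_smul, Matrix.TransvectionStruct.toMatrix_mk]
      have eu : Matrix.transvection (0 : Fin 2) 1 c = !![1,c;0,1] := by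
        ext i j; fin_cases i <;> fin_cases j <;>
          simp [Matrix.transvection, Matrix.single, Matrix.one_apply]
      have el : Matrix.transvection (1 : Fin 2) 0 c = !![1,0;c,1] := by
        ext i j; fin_cases i <;> fin_cases j <;>
          simp [Matrix.transvection, Matrix.single, Matrix.one_apply]
      fin_cases i <;> fin_cases j
      · exact absurd rfl hij
      · show HProd (Matrix.transvection (0 : Fin 2) 1 c)
        rw [eu]; exact hprod_upper c
      · show HProd (Matrix.transvection (1 : Fin 2) 0 c)
        rw [el]; exact hprod_lower c
      · exact absurd rfl hij
    · -- mul
      rintro A B _ _ ⟨c, hc, hA⟩ ⟨c', hc', hB⟩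
      refine ⟨c * c', mul_ne_zero hc hc', ?_⟩
      have e : (c * c') • (A * B) = (c • A) * (c' • B) := by
        rw [smul_mul_assoc, mul_smul_comm, smul_smul]
      rw [e]; exact hA.mul hB
  obtain ⟨c, hc, hcX⟩ := hQ
  have hdet2 : (c • X).det = c^2 * X.det := by
    rw [det_smul]; norm_num
  have hre := hcX.det_real
  rw [hdet2, _root_.map_mul, hreal, _root_.map_pow] at hre
  have hc2 : (starRingEnd ℂ) c ^ 2 = c ^ 2 := by
    have := mul_right_cancel₀ hd hre
    exact this
  have him : c.re * c.im = 0 := by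
    have h := congrArg Complex.im hc2
    simp [pow_two, Complex.mul_im, Complex.mul_re] at h
    ring_nf at h ⊢
    linarith [h]
  rcases mul_eq_zero.1 him with h | h
  · -- c purely imaginary : c = c.im * I
    have hcim : c.im ≠ 0 := by
      intro h'; apply hc; apply Complex.ext <;> simp [h, h']
    have e : X = ((c.im⁻¹ : ℝ):ℂ) • ((-Complex.I) • (c • X)) := by
      rw [smul_smul, smul_smul]
      have h2 : ((c.im⁻¹ : ℝ):ℂ) * -Complex.I * c = 1 := by
        have hce : c = (c.im : ℂ) * Complex.I := by
          apply Complex.ext <;> simp [h]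
        rw [hce]
        have : ((c.im:ℂ)) ≠ 0 := by exact_mod_cast hcim
        field_simp
        ring_nf
        simp [Complex.I_sq]
        exact mul_inv_cancel₀ this
      rw [h2, one_smul]
    rw [e]
    apply hprod_smul_real _ (inv_ne_zero hcim)
    have e2 : (-Complex.I) • (c • X) = ((-Complex.I) • (1:M2)) * (c • X) := by
      rw [smul_mul_assoc, one_mul]
    rw [e2]
    exact hprod_neg_I_one.mul hcX
  · -- c real
    have hcre : c.re ≠ 0 := by
      intro h'; apply hc; apply Complex.ext <;> simp [h, h']
    have e : X = ((c.re⁻¹ : ℝ):ℂ) • (c • X) := by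
      rw [smul_smul]
      have : ((c.re⁻¹ : ℝ):ℂ) * c = 1 := by
        have : c = (c.re : ℂ) := by apply Complex.ext <;> simp [h]
        conv_lhs => rw [this]
        simp [Complex.ofReal_re, inv_mul_cancel₀ hcre]
        norm_cast
        simp [inv_mul_cancel₀ hcre]
      rw [this, one_smul]
    rw [e]
    exact hprod_smul_real _ (inv_ne_zero hcre) hcX

/- ### From Hermitian products to products of Dirac matrices -/

noncomputable def EB (A : M2) : M4 := fromBlocks A 0 0 (ddag A)

lemma sqrt2_mul_self : ((Real.sqrt 2 : ℝ) : ℂ) * ((Real.sqrt 2 : ℝ) : ℂ) = 2 := by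
  norm_cast
  rw [Real.mul_self_sqrt (by norm_num)]

lemma sqrt2_ne : ((Real.sqrt 2 : ℝ) : ℂ) ≠ 0 := by
  simp [Real.sqrt_eq_zero']

lemma EB_mul (A B : M2) : EB A * EB B = EB (A * B) := by
  simp [EB, fromBlocks_multiply, ddag_mul]

lemma EB_one : EB (1 : M2) = 1 := by
  simp [EB, ddag, fromBlocks_one]

lemma gamma_mul (a b : M2) : diracGamma a * diracGamma b
    = fromBlocks ((2:ℂ) • (a * b.adjugate)) 0 0 ((2:ℂ) • (a.adjugate * b)) := by
  simp only [diracGamma, fromBlocks_multiply, Matrix.zero_mul, Matrix.mul_zero, add_zero, zero_add,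
    smul_mul_smul_comm, sqrt2_mul_self]

lemma gamma_pair {h : M2} (hh : h.IsHermitian) :
    diracGamma ((2:ℂ)⁻¹ • h) * diracGamma 1 = EB h := by
  rw [gamma_mul]
  simp [EB, adjugate_smul, hh.ddag_eq, smul_smul]

lemma smul_herm {c : ℂ} (hc : starRingEnd ℂ c = c) {h : M2} (hh : h.IsHermitian) :
    (c • h).IsHermitian := by
  show (c • h)ᴴ = c • h
  rw [conjTranspose_smul, hh.eq, Complex.star_def, hc]

lemma hlist_to_gamma : ∀ (hs : List M2), (∀ h ∈ hs, h.IsHermitian ∧ h.det ≠ 0) →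
    ∃ l : List M2, (∀ v ∈ l, v.IsHermitian ∧ v.det ≠ 0) ∧
      (l.map diracGamma).prod = EB hs.prod := by
  intro hs
  induction hs with
  | nil =>
    intro _
    exact ⟨[], by simp, by simp [EB_one]⟩
  | cons h t ih =>
    intro hmem
    obtain ⟨l, hl, hp⟩ := ih (fun x hx => hmem x (List.mem_cons_of_mem _ hx))
    have hh := hmem h List.mem_cons_self
    refine ⟨((2:ℂ)⁻¹ • h) :: 1 :: l, ?_, ?_⟩
    · intro v hv
      simp only [List.mem_cons] at hv
      rcases hv with rfl | rfl | hv
      · constructor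
        · exact smul_herm (by rw [map_inv₀, Complex.conj_ofNat]) hh.1
        · rw [det_smul]
          simp [hh.2]
      · exact ⟨isHermitian_one, by simp⟩
      · exact hl v hv
    · simp only [List.map_cons, List.prod_cons, ← Matrix.mul_assoc]
      rw [gamma_pair hh.1, hp, EB_mul]

/- ### Extraction of block equations from the Clifford condition -/

lemma extract {K P v w : M2}
    (h : fromBlocks K P (ddag P) (ddag K) * diracGamma v
        = diracGamma w * fromBlocks K P (ddag P) (ddag K)) :
    P * v.adjugate = w * ddag P ∧ K * v = w * ddag K ∧
      ddag K * v.adjugate = w.adjugate * K ∧ ddag P * v = w.adjugate * P := by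
  simp only [diracGamma, fromBlocks_multiply, Matrix.mul_zero, Matrix.zero_mul,
    add_zero, zero_add, Matrix.mul_smul, Matrix.smul_mul] at h
  have inj := smul_right_injective M2 sqrt2_ne
  refine ⟨inj ?_, inj ?_, inj ?_, inj ?_⟩
  · exact congrArg Matrix.toBlocks₁₁ h
  · exact congrArg Matrix.toBlocks₁₂ h
  · exact congrArg Matrix.toBlocks₂₁ h
  · exact congrArg Matrix.toBlocks₂₂ h

lemma K_det_ne {K : M2} (hK0 : K ≠ 0)
    (h : ∀ v : M2, v.IsHermitian → ∃ w : M2, K * v = w * ddag K) : K.det ≠ 0 := by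
  intro hd
  obtain ⟨w, hw⟩ := h (Kᴴ * K) (isHermitian_conjTranspose_mul_self K)
  have hzero : ddag K * Kᴴ = 0 := by
    rw [ddag, adjugate_mul, det_conjTranspose, hd]
    simp
  have h2 : K * (Kᴴ * K) * Kᴴ = 0 := by
    rw [hw, Matrix.mul_assoc, hzero, Matrix.mul_zero]
  have h3 : (K * Kᴴ) * (K * Kᴴ) = 0 := by
    rw [← h2]; noncomm_ring
  have hB : (K * Kᴴ)ᴴ * (K * Kᴴ) = 0 := by
    rw [(isHermitian_mul_conjTranspose_self K).eq]; exact h3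
  have : K * Kᴴ = 0 := conjTranspose_mul_self_eq_zero.1 hB
  exact hK0 (self_mul_conjTranspose_eq_zero.1 this)

lemma P_det_ne {Q : M2} (hP0 : Q ≠ 0)
    (h : ∀ v : M2, v.IsHermitian → ∃ w : M2, Q * v.adjugate = w * ddag Q) : Q.det ≠ 0 := by
  intro hd
  obtain ⟨w, hw⟩ := h ((Qᴴ * Q).adjugate)
    ((isHermitian_conjTranspose_mul_self Q).adjugate)
  rw [adjugate_adjugate _ (by simp : Fintype.card (Fin 2) ≠ 1)] at hw
  simp only [Fintype.card_fin] at hw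
  have hw' : Q * (Qᴴ * Q) = w * ddag Q := by
    rw [← hw]; norm_num
  have hzero : ddag Q * Qᴴ = 0 := by
    rw [ddag, adjugate_mul, det_conjTranspose, hd]
    simp
  have h2 : Q * (Qᴴ * Q) * Qᴴ = 0 := by
    rw [hw', Matrix.mul_assoc, hzero, Matrix.mul_zero]
  have h3 : (Q * Qᴴ) * (Q * Qᴴ) = 0 := by
    rw [← h2]; noncomm_ring
  have hB : (Q * Qᴴ)ᴴ * (Q * Qᴴ) = 0 := by
    rw [(isHermitian_mul_conjTranspose_self Q).eq]; exact h3
  have : Q * Qᴴ = 0 := conjTranspose_mul_self_eq_zero.1 hB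
  exact hP0 (self_mul_conjTranspose_eq_zero.1 this)

lemma det_w0_one {K w₀ : M2} (hK0 : K ≠ 0)
    (h1 : K = w₀ * ddag K) (h2 : ddag K = w₀.adjugate * K) : w₀.det = 1 := by
  have he : w₀.det • K = K := by
    conv_rhs => rw [h1, h2]
    rw [← Matrix.mul_assoc, Matrix.mul_adjugate, Matrix.smul_mul, Matrix.one_mul]
  obtain ⟨i, j, hij⟩ : ∃ i j, K i j ≠ 0 := by
    by_contra hc
    push_neg at hc
    exact hK0 (by ext i j; simpa using hc i j)
  have := congrFun (congrFun he i) j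
  simp only [Matrix.smul_apply, smul_eq_mul] at this
  field_simp at this
  tauto

lemma det_real_of {K w₀ : M2} (hK0 : K ≠ 0)
    (h1 : K = w₀ * ddag K) (h2 : ddag K = w₀.adjugate * K) :
    (starRingEnd ℂ) K.det = K.det := by
  have hw := det_w0_one hK0 h1 h2
  conv_rhs => rw [h1]
  rw [det_mul, hw, one_mul, ddag, det_adjugate, det_conjTranspose]
  simp [Complex.star_def]

/- ### The mixed case is impossible -/

lemma intertwine {K P w₀ w : M2} (hPd : IsUnit P.det) (v : M2)
    (h3 : ddag K = w₀.adjugate * K) (h4 : ddag P = w₀.adjugate * P)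
    (e1 : P * v.adjugate = w * ddag P) (e2 : K * v = w * ddag K) :
    v.adjugate * (P⁻¹ * K) = (P⁻¹ * K) * v := by
  have hMP : P * v.adjugate = (w * w₀.adjugate) * P := by
    rw [e1, h4, Matrix.mul_assoc]
  have hMK : K * v = (w * w₀.adjugate) * K := by
    rw [e2, h3, Matrix.mul_assoc]
  set M := w * w₀.adjugate with hM
  have hv : v.adjugate = P⁻¹ * (M * P) := by
    rw [← hMP, Matrix.nonsing_inv_mul_cancel_left _ _ hPd]
  calc v.adjugate * (P⁻¹ * K) = P⁻¹ * (M * P) * (P⁻¹ * K) := by rw [hv]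
    _ = P⁻¹ * (M * (P * P⁻¹ * K)) := by simp only [Matrix.mul_assoc]
    _ = P⁻¹ * (M * K) := by rw [Matrix.mul_nonsing_inv _ hPd, Matrix.one_mul]
    _ = P⁻¹ * (K * v) := by rw [hMK]
    _ = (P⁻¹ * K) * v := by simp only [Matrix.mul_assoc]

lemma A_eq_zero {A : M2}
    (h1 : (!![1,0;0,0] : M2).adjugate * A = A * !![1,0;0,0])
    (h2 : (!![0,0;0,1] : M2).adjugate * A = A * !![0,0;0,1])
    (h3 : (!![0,1;1,0] : M2).adjugate * A = A * !![0,1;1,0])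
    (h4 : (!![0,-I;I,0] : M2).adjugate * A = A * !![0,-I;I,0]) : A = 0 := by
  simp only [Matrix.adjugate_fin_two] at h1 h2 h3 h4
  have c00 := congrFun (congrFun h1 0) 0
  have c11 := congrFun (congrFun h2 1) 1
  have d00 := congrFun (congrFun h3 0) 0
  have e00 := congrFun (congrFun h4 0) 0
  simp [Matrix.mul_apply, Fin.sum_univ_two] at c00 c11 d00 e00
  have h10 : A 1 0 = 0 := by
    rw [← d00] at e00
    linear_combination (-Complex.I/2) * e00 + A 1 0 * Complex.I_sq
  have h01 : A 0 1 = 0 := by rw [← d00, h10, neg_zero]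
  ext i j
  fin_cases i <;> fin_cases j <;> simp
  exacts [c00.symm, h01, h10, c11.symm]

end Helpers

/-- The Clifford group is multiplicatively generated by the Clifford images of non-null
Minkowski vectors: every invertible `Φ = fromBlocks K P (P‡) (K‡)` whose adjoint action
stabilizes `γ(H)` is a finite product `γ(v₁)·γ(v₂)⋯γ(vₙ)` of images of Hermitian
matrices `vᵢ` with `det vᵢ ≠ 0` (nonzero Lorentz pseudo-norm). -/
theorem clifford_group_generated_by_nonnull_vectors (K P : M2)
    (hdet : (fromBlocks K P (ddag P) (ddag K)).det ≠ 0)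
    (hcl : ∀ v : M2, v.IsHermitian → ∃ w : M2, w.IsHermitian ∧
      fromBlocks K P (ddag P) (ddag K) * diracGamma v
        = diracGamma w * fromBlocks K P (ddag P) (ddag K)) :
    ∃ l : List M2, (∀ v ∈ l, v.IsHermitian ∧ v.det ≠ 0) ∧
      fromBlocks K P (ddag P) (ddag K) = (l.map diracGamma).prod := by
  -- equations from the Clifford condition at v = 1
  obtain ⟨w₀, _, heq0⟩ := hcl 1 isHermitian_one
  obtain ⟨f1, f2, f3, f4⟩ := extract heq0
  simp only [adjugate_one, Matrix.mul_one] at f1 f2 f3 f4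
  by_cases hP0 : P = 0
  · -- even case
    subst hP0
    have hK0 : K ≠ 0 := by
      rintro rfl
      apply hdet
      simp only [ddag_zero]
      have : fromBlocks (0:M2) (0:M2) (0:M2) (0:M2) = (0 : M4) := by
        ext (i | i) (j | j) <;> rfl
      rw [this, det_zero]
    have hKd : K.det ≠ 0 := by
      apply K_det_ne hK0
      intro v hv
      obtain ⟨w, _, heq⟩ := hcl v hv
      exact ⟨w, (extract heq).2.1⟩
    have hKreal : (starRingEnd ℂ) K.det = K.det := det_real_of hK0 f2 f3
    obtain ⟨hs, hhs, hprod⟩ := hprod_main hKd hKreal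
    obtain ⟨l, hl, hpl⟩ := hlist_to_gamma hs hhs
    refine ⟨l, hl, ?_⟩
    rw [hpl, ← hprod, EB, ddag_zero]
  · -- P ≠ 0
    have hPd : P.det ≠ 0 := by
      apply P_det_ne hP0
      intro v hv
      obtain ⟨w, _, heq⟩ := hcl v hv
      exact ⟨w, (extract heq).1⟩
    by_cases hK0 : K = 0
    · -- odd case
      subst hK0
      have hPreal : (starRingEnd ℂ) P.det = P.det := det_real_of hP0 f1 f4
      -- K' = (√2)⁻¹ • ddag P
      set c0 : ℂ := ((Real.sqrt 2 : ℝ) : ℂ) with hc0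
      set K' : M2 := c0⁻¹ • ddag P with hK'
      have hK'det : K'.det ≠ 0 := by
        rw [hK', det_smul, det_ddag]
        simp only [Fintype.card_fin]
        apply mul_ne_zero
        · exact pow_ne_zero _ (inv_ne_zero sqrt2_ne)
        · simpa using fun h => hP0 (by
            apply_fun (starRingEnd ℂ) at h
            simp at h
            exact False.elim (hPd (by simpa using h)))
      have hK'real : (starRingEnd ℂ) K'.det = K'.det := by
        rw [hK', det_smul, det_ddag]
        simp only [Fintype.card_fin, _root_.map_mul, _root_.map_pow, map_inv₀]
        rw [Complex.conj_conj, hc0, Complex.conj_ofReal, hPreal]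
      obtain ⟨hs, hhs, hprodK⟩ := hprod_main hK'det hK'real
      obtain ⟨l, hl, hpl⟩ := hlist_to_gamma hs hhs
      refine ⟨1 :: l, ?_, ?_⟩
      · intro v hv
        simp only [List.mem_cons] at hv
        rcases hv with rfl | hv
        · exact ⟨isHermitian_one, by simp⟩
        · exact hl v hv
      · rw [List.map_cons, List.prod_cons, hpl, ← hprodK]
        have hdd : ddag K' = c0⁻¹ • P := by
          rw [hK', ddag_smul, ddag_ddag, map_inv₀, hc0, Complex.conj_ofReal]
        have hγ1 : diracGamma 1 = fromBlocks 0 (c0 • 1) (c0 • 1) 0 := by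
          rw [diracGamma, adjugate_one]
        rw [hγ1, EB, fromBlocks_multiply]
        simp only [Matrix.zero_mul, Matrix.mul_zero, add_zero, zero_add,
          Matrix.smul_mul, Matrix.one_mul, hdd, hK', smul_smul,
          mul_inv_cancel₀ sqrt2_ne, one_smul, ddag_zero]
        simp only [ddag_smul, ddag_ddag, map_inv₀, hc0, Complex.conj_ofReal, smul_smul,
          mul_inv_cancel₀ sqrt2_ne, one_smul]
    · -- mixed case: impossible
      exfalso
      have hKd : K.det ≠ 0 := by
        apply K_det_ne hK0
        intro v hv
        obtain ⟨w, _, heq⟩ := hcl v hv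
        exact ⟨w, (extract heq).2.1⟩
      have hPu : IsUnit P.det := isUnit_iff_ne_zero.2 hPd
      have hcomm : ∀ v : M2, v.IsHermitian →
          v.adjugate * (P⁻¹ * K) = (P⁻¹ * K) * v := by
        intro v hv
        obtain ⟨w, _, heq⟩ := hcl v hv
        obtain ⟨e1, e2, _, _⟩ := extract heq
        exact intertwine hPu v f3 f4 e1 e2
      have hherm1 : (!![1,0;0,0] : M2).IsHermitian := by
        ext i j; fin_cases i <;> fin_cases j <;> simp [conjTranspose_apply]
      have hherm2 : (!![0,0;0,1] : M2).IsHermitian := by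
        ext i j; fin_cases i <;> fin_cases j <;> simp [conjTranspose_apply]
      have hherm3 : (!![0,1;1,0] : M2).IsHermitian := by
        ext i j; fin_cases i <;> fin_cases j <;> simp [conjTranspose_apply]
      have hherm4 : (!![0,-Complex.I;Complex.I,0] : M2).IsHermitian := by
        ext i j; fin_cases i <;> fin_cases j <;> simp [conjTranspose_apply]
      have hA0 : P⁻¹ * K = 0 := A_eq_zero (hcomm _ hherm1) (hcomm _ hherm2)
        (hcomm _ hherm3) (hcomm _ hherm4)
      have : K = 0 := by
        have h := Matrix.mul_nonsing_inv_cancel_left P K hPu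
        rw [hA0, Matrix.mul_zero] at h
        exact h.symm
      exact hK0 this
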